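/- Let M ∈ GL₂(ℝ) be any invertible real 2×2 matrix. Define the geodesic curve g(u) := M·diag(eᵘ, e⁻ᵘ)·Mᵀ and the horocycle curve ĝ(u) := M·[[1, u],[u, 1+u²]]·Mᵀ of positive definite 2×2 matrices. Then for every u ∈ ℝ, tr( (1/4)·(g(u)⁻¹·g'(u))² − (1/2)·g(u)⁻¹·g''(u) ) = −1/2, and likewise tr( (1/4)·(ĝ(u)⁻¹·ĝ'(u))² − (1/2)·ĝ(u)⁻¹·ĝ''(u) ) = −1/2. -/

import Mathlib

open Matrix

attribute [local instance] Matrix.frobeniusNormedAddCommGroup Matrix.frobeniusNormedSpace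

/-- The geodesic curve `g(u) = M diag(eᵘ, e⁻ᵘ) Mᵀ` in positive definite `2×2` matrices. -/
noncomputable def geodesicCurve (M : Matrix (Fin 2) (Fin 2) ℝ) :
    ℝ → Matrix (Fin 2) (Fin 2) ℝ :=
  fun u => M * Matrix.diagonal ![Real.exp u, Real.exp (-u)] * Mᵀ

/-- The horocycle curve `ĝ(u) = M [[1,u],[u,1+u²]] Mᵀ` in positive definite `2×2` matrices. -/
noncomputable def horocycleCurve (M : Matrix (Fin 2) (Fin 2) ℝ) :
    ℝ → Matrix (Fin 2) (Fin 2) ℝ :=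
  fun u => M * !![1, u; u, 1 + u ^ 2] * Mᵀ

/- Auxiliary material -/

noncomputable def conjCLM (M : Matrix (Fin 2) (Fin 2) ℝ) :
    Matrix (Fin 2) (Fin 2) ℝ →L[ℝ] Matrix (Fin 2) (Fin 2) ℝ :=
  LinearMap.toContinuousLinearMap (LinearMap.mulRight ℝ Mᵀ ∘ₗ LinearMap.mulLeft ℝ M)

lemma conjCLM_apply (M X : Matrix (Fin 2) (Fin 2) ℝ) :
    conjCLM M X = M * X * Mᵀ := by
  simp [conjCLM]

lemma diag_decomp (a b : ℝ) :
    Matrix.diagonal ![a, b] =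
      a • (!![1,0;0,0] : Matrix (Fin 2) (Fin 2) ℝ) + b • !![0,0;0,1] := by
  ext i j
  fin_cases i <;> fin_cases j <;> simp [Matrix.diagonal]

lemma horo_decomp (u : ℝ) :
    (!![1, u; u, 1 + u ^ 2] : Matrix (Fin 2) (Fin 2) ℝ) =
      (1 : Matrix (Fin 2) (Fin 2) ℝ) + u • !![0,1;1,0] + (u^2) • !![0,0;0,1] := by
  ext i j
  fin_cases i <;> fin_cases j <;> simp [Matrix.one_apply]

lemma hasDerivAt_exp_neg (u : ℝ) :
    HasDerivAt (fun u : ℝ => Real.exp (-u)) (-Real.exp (-u)) u := by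
  have h := (Real.hasDerivAt_exp (-u)).comp u (hasDerivAt_neg u)
  simp at h
  exact h

lemma hasDerivAt_geodesic (M : Matrix (Fin 2) (Fin 2) ℝ) (u : ℝ) :
    HasDerivAt (geodesicCurve M)
      (M * Matrix.diagonal ![Real.exp u, -Real.exp (-u)] * Mᵀ) u := by
  have hD : HasDerivAt
      (fun u : ℝ => Real.exp u • (!![1,0;0,0] : Matrix (Fin 2) (Fin 2) ℝ)
        + Real.exp (-u) • !![0,0;0,1])
      (Real.exp u • (!![1,0;0,0] : Matrix (Fin 2) (Fin 2) ℝ)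
        + (-Real.exp (-u)) • !![0,0;0,1]) u :=
    ((Real.hasDerivAt_exp u).smul_const _).add ((hasDerivAt_exp_neg u).smul_const _)
  have := (conjCLM M).hasFDerivAt.comp_hasDerivAt u hD
  have heq : geodesicCurve M = fun u =>
      conjCLM M (Real.exp u • (!![1,0;0,0] : Matrix (Fin 2) (Fin 2) ℝ)
        + Real.exp (-u) • !![0,0;0,1]) := by
    funext v
    simp [geodesicCurve, conjCLM_apply, diag_decomp]
  rw [heq]
  simp only [Function.comp_def, conjCLM_apply] at this
  simp only [geodesicCurve, diag_decomp, conjCLM_apply]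
  exact this

lemma hasDerivAt_geodesic_deriv (M : Matrix (Fin 2) (Fin 2) ℝ) (u : ℝ) :
    HasDerivAt (fun u => M * Matrix.diagonal ![Real.exp u, -Real.exp (-u)] * Mᵀ)
      (geodesicCurve M u) u := by
  have h1 : HasDerivAt (fun u : ℝ => -Real.exp (-u)) (Real.exp (-u)) u := by
    have h := (hasDerivAt_exp_neg u).neg
    simp at h
    exact h
  have hD : HasDerivAt
      (fun u : ℝ => Real.exp u • (!![1,0;0,0] : Matrix (Fin 2) (Fin 2) ℝ)
        + (-Real.exp (-u)) • !![0,0;0,1])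
      (Real.exp u • (!![1,0;0,0] : Matrix (Fin 2) (Fin 2) ℝ)
        + Real.exp (-u) • !![0,0;0,1]) u :=
    ((Real.hasDerivAt_exp u).smul_const _).add (h1.smul_const _)
  have := (conjCLM M).hasFDerivAt.comp_hasDerivAt u hD
  have heq : (fun u => M * Matrix.diagonal ![Real.exp u, -Real.exp (-u)] * Mᵀ)
      = fun u => conjCLM M (Real.exp u • (!![1,0;0,0] : Matrix (Fin 2) (Fin 2) ℝ)
        + (-Real.exp (-u)) • !![0,0;0,1]) := by
    funext v
    simp [conjCLM_apply, diag_decomp]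
  rw [heq]
  simp only [Function.comp_def, conjCLM_apply] at this
  simp only [geodesicCurve, diag_decomp, conjCLM_apply]
  exact this

lemma hasDerivAt_horocycle (M : Matrix (Fin 2) (Fin 2) ℝ) (u : ℝ) :
    HasDerivAt (horocycleCurve M)
      (M * !![0, 1; 1, 2*u] * Mᵀ) u := by
  have hD : HasDerivAt
      (fun u : ℝ => (1 : Matrix (Fin 2) (Fin 2) ℝ) + u • !![0,1;1,0]
        + (u^2) • !![0,0;0,1])
      ((1 : ℝ) • (!![0,1;1,0] : Matrix (Fin 2) (Fin 2) ℝ)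
        + (2*u) • !![0,0;0,1]) u := by
    have h2 : HasDerivAt (fun u : ℝ => u ^ 2) (2*u) u := by
      simpa using hasDerivAt_pow 2 u
    have h := ((hasDerivAt_const u (1 : Matrix (Fin 2) (Fin 2) ℝ)).add
      ((hasDerivAt_id u).smul_const (!![0,1;1,0] : Matrix (Fin 2) (Fin 2) ℝ))).add
      (h2.smul_const (!![0,0;0,1] : Matrix (Fin 2) (Fin 2) ℝ))
    convert h using 1
    any_goals rfl
    ext i j
    fin_cases i <;> fin_cases j <;> simp
  have := (conjCLM M).hasFDerivAt.comp_hasDerivAt u hD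
  have heq : horocycleCurve M = fun u =>
      conjCLM M ((1 : Matrix (Fin 2) (Fin 2) ℝ) + u • !![0,1;1,0]
        + (u^2) • !![0,0;0,1]) := by
    funext v
    simp [horocycleCurve, conjCLM_apply, horo_decomp]
  rw [heq]
  have hval : ((1:ℝ) • (!![0,1;1,0] : Matrix (Fin 2) (Fin 2) ℝ)
      + (2*u) • !![0,0;0,1]) = !![0, 1; 1, 2*u] := by
    ext i j
    fin_cases i <;> fin_cases j <;> simp
  rw [← hval]
  simp only [Function.comp_def, conjCLM_apply] at this
  simp only [conjCLM_apply]
  exact this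

lemma hasDerivAt_horocycle_deriv (M : Matrix (Fin 2) (Fin 2) ℝ) (u : ℝ) :
    HasDerivAt (fun u : ℝ => M * !![0, 1; 1, 2*u] * Mᵀ)
      (M * !![0, 0; 0, 2] * Mᵀ) u := by
  have hD : HasDerivAt
      (fun u : ℝ => (!![0,1;1,0] : Matrix (Fin 2) (Fin 2) ℝ) + (2*u) • !![0,0;0,1])
      ((2:ℝ) • (!![0,0;0,1] : Matrix (Fin 2) (Fin 2) ℝ)) u := by
    have h2 : HasDerivAt (fun u : ℝ => 2*u) 2 u := by
      simpa using (hasDerivAt_id u).const_mul (2:ℝ)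
    have h := (hasDerivAt_const u (!![0,1;1,0] : Matrix (Fin 2) (Fin 2) ℝ)).add
      (h2.smul_const (!![0,0;0,1] : Matrix (Fin 2) (Fin 2) ℝ))
    convert h using 1
    any_goals rfl
    ext i j
    fin_cases i <;> fin_cases j <;> simp
  have := (conjCLM M).hasFDerivAt.comp_hasDerivAt u hD
  have heq : (fun u : ℝ => M * !![0, 1; 1, 2*u] * Mᵀ)
      = fun u : ℝ => conjCLM M ((!![0,1;1,0] : Matrix (Fin 2) (Fin 2) ℝ)
        + (2*u) • !![0,0;0,1]) := by
    funext v
    congr 2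
    ext i j
    fin_cases i <;> fin_cases j <;> simp
  rw [heq]
  have hval : ((2:ℝ) • (!![0,0;0,1] : Matrix (Fin 2) (Fin 2) ℝ)) = !![0,0;0,2] := by
    ext i j
    fin_cases i <;> fin_cases j <;> simp
  rw [← hval]
  simp only [Function.comp_def, conjCLM_apply] at this
  simp only [conjCLM_apply]
  exact this

/-- Reduce the trace of the conjugated expression to that of the unconjugated one. -/
lemma conj_trace_key (M : Matrix (Fin 2) (Fin 2) ℝ) (hM : IsUnit M)
    (D Dinv D1 D2 : Matrix (Fin 2) (Fin 2) ℝ) (hDl : Dinv * D = 1) (hDr : D * Dinv = 1) :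
    ((1/4 : ℝ) • ((M * D * Mᵀ)⁻¹ * (M * D1 * Mᵀ)) ^ 2 -
     (1/2 : ℝ) • ((M * D * Mᵀ)⁻¹ * (M * D2 * Mᵀ))).trace
    = ((1/4 : ℝ) • (Dinv * D1) ^ 2 - (1/2 : ℝ) • (Dinv * D2)).trace := by
  have hdet : IsUnit M.det := (Matrix.isUnit_iff_isUnit_det M).mp hM
  have hMl : M⁻¹ * M = 1 := Matrix.nonsing_inv_mul M hdet
  have hMr : M * M⁻¹ = 1 := Matrix.mul_nonsing_inv M hdet
  have hTl : Mᵀ⁻¹ * Mᵀ = 1 := by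
    rw [← Matrix.transpose_nonsing_inv, ← Matrix.transpose_mul, hMr, Matrix.transpose_one]
  have hTr : Mᵀ * Mᵀ⁻¹ = 1 := by
    rw [← Matrix.transpose_nonsing_inv, ← Matrix.transpose_mul, hMl, Matrix.transpose_one]
  have hinv : (M * D * Mᵀ)⁻¹ = Mᵀ⁻¹ * Dinv * M⁻¹ := by
    apply Matrix.inv_eq_right_inv
    calc M * D * Mᵀ * (Mᵀ⁻¹ * Dinv * M⁻¹)
        = M * (D * (Mᵀ * Mᵀ⁻¹) * Dinv) * M⁻¹ := by simp [Matrix.mul_assoc]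
      _ = 1 := by rw [hTr, Matrix.mul_one, hDr, Matrix.mul_one, hMr]
  have hc1 : (M * D * Mᵀ)⁻¹ * (M * D1 * Mᵀ) = Mᵀ⁻¹ * (Dinv * D1) * Mᵀ := by
    rw [hinv]
    calc Mᵀ⁻¹ * Dinv * M⁻¹ * (M * D1 * Mᵀ)
        = Mᵀ⁻¹ * Dinv * ((M⁻¹ * M) * D1) * Mᵀ := by simp [Matrix.mul_assoc]
      _ = Mᵀ⁻¹ * (Dinv * D1) * Mᵀ := by rw [hMl, Matrix.one_mul, Matrix.mul_assoc Mᵀ⁻¹]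
  have hc2 : (M * D * Mᵀ)⁻¹ * (M * D2 * Mᵀ) = Mᵀ⁻¹ * (Dinv * D2) * Mᵀ := by
    rw [hinv]
    calc Mᵀ⁻¹ * Dinv * M⁻¹ * (M * D2 * Mᵀ)
        = Mᵀ⁻¹ * Dinv * ((M⁻¹ * M) * D2) * Mᵀ := by simp [Matrix.mul_assoc]
      _ = Mᵀ⁻¹ * (Dinv * D2) * Mᵀ := by rw [hMl, Matrix.one_mul, Matrix.mul_assoc Mᵀ⁻¹]
  have hsq : (Mᵀ⁻¹ * (Dinv * D1) * Mᵀ) ^ 2 = Mᵀ⁻¹ * (Dinv * D1) ^ 2 * Mᵀ := by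
    rw [pow_two, pow_two]
    calc Mᵀ⁻¹ * (Dinv * D1) * Mᵀ * (Mᵀ⁻¹ * (Dinv * D1) * Mᵀ)
        = Mᵀ⁻¹ * (Dinv * D1) * ((Mᵀ * Mᵀ⁻¹) * ((Dinv * D1) * Mᵀ)) := by
          simp [Matrix.mul_assoc]
      _ = Mᵀ⁻¹ * ((Dinv * D1) * (Dinv * D1)) * Mᵀ := by
          rw [hTr, Matrix.one_mul]; simp [Matrix.mul_assoc]
  rw [hc1, hc2, hsq]
  have : ∀ X : Matrix (Fin 2) (Fin 2) ℝ, (Mᵀ⁻¹ * X * Mᵀ).trace = X.trace := by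
    intro X
    rw [Matrix.trace_mul_cycle, hTr, Matrix.one_mul]
  calc ((1/4 : ℝ) • (Mᵀ⁻¹ * (Dinv * D1) ^ 2 * Mᵀ) -
        (1/2 : ℝ) • (Mᵀ⁻¹ * (Dinv * D2) * Mᵀ)).trace
      = (Mᵀ⁻¹ * ((1/4 : ℝ) • (Dinv * D1) ^ 2 - (1/2 : ℝ) • (Dinv * D2)) * Mᵀ).trace := by
        congr 1
        rw [Matrix.mul_sub, Matrix.sub_mul]
        simp [Matrix.mul_smul, Matrix.smul_mul]
    _ = _ := this _

theorem ricci_of_geodesic_and_horocycle (M : Matrix (Fin 2) (Fin 2) ℝ)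
    (hM : IsUnit M) (u : ℝ) :
    ((1/4 : ℝ) • ((geodesicCurve M u)⁻¹ * deriv (geodesicCurve M) u) ^ 2 -
     (1/2 : ℝ) • ((geodesicCurve M u)⁻¹ * deriv (deriv (geodesicCurve M)) u)).trace
      = -(1/2) ∧
    ((1/4 : ℝ) • ((horocycleCurve M u)⁻¹ * deriv (horocycleCurve M) u) ^ 2 -
     (1/2 : ℝ) • ((horocycleCurve M u)⁻¹ * deriv (deriv (horocycleCurve M)) u)).trace
      = -(1/2) := by
  have hgd : deriv (geodesicCurve M)
      = fun u => M * Matrix.diagonal ![Real.exp u, -Real.exp (-u)] * Mᵀ := by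
    funext v; exact (hasDerivAt_geodesic M v).deriv
  have hgdd : deriv (deriv (geodesicCurve M)) u = geodesicCurve M u := by
    rw [hgd]; exact (hasDerivAt_geodesic_deriv M u).deriv
  have hhd : deriv (horocycleCurve M) = fun u => M * !![0, 1; 1, 2*u] * Mᵀ := by
    funext v; exact (hasDerivAt_horocycle M v).deriv
  have hhdd : deriv (deriv (horocycleCurve M)) u = M * !![0, 0; 0, 2] * Mᵀ := by
    rw [hhd]; exact (hasDerivAt_horocycle_deriv M u).deriv
  constructor
  · rw [hgdd, hgd]
    show ((1/4 : ℝ) • ((M * Matrix.diagonal ![Real.exp u, Real.exp (-u)] * Mᵀ)⁻¹ *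
        (M * Matrix.diagonal ![Real.exp u, -Real.exp (-u)] * Mᵀ)) ^ 2 -
      (1/2 : ℝ) • ((M * Matrix.diagonal ![Real.exp u, Real.exp (-u)] * Mᵀ)⁻¹ *
        (M * Matrix.diagonal ![Real.exp u, Real.exp (-u)] * Mᵀ))).trace = -(1/2)
    rw [conj_trace_key M hM _ (Matrix.diagonal ![Real.exp (-u), Real.exp u]) _ _
      (by ext i j; fin_cases i <;> fin_cases j <;>
        simp [Matrix.mul_apply, Matrix.diagonal, Matrix.one_apply, Fin.sum_univ_two,
          ← Real.exp_add])
      (by ext i j; fin_cases i <;> fin_cases j <;>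
        simp [Matrix.mul_apply, Matrix.diagonal, Matrix.one_apply, Fin.sum_univ_two,
          ← Real.exp_add])]
    simp [Matrix.trace_fin_two, Matrix.mul_apply, Matrix.diagonal, Fin.sum_univ_two,
      pow_two, ← Real.exp_add]
    norm_num
  · rw [hhdd, hhd]
    show ((1/4 : ℝ) • ((M * !![1, u; u, 1 + u ^ 2] * Mᵀ)⁻¹ *
        (M * !![0, 1; 1, 2*u] * Mᵀ)) ^ 2 -
      (1/2 : ℝ) • ((M * !![1, u; u, 1 + u ^ 2] * Mᵀ)⁻¹ *
        (M * !![0, 0; 0, 2] * Mᵀ))).trace = (-(1/2) : ℝ)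
    rw [conj_trace_key M hM _ !![1 + u^2, -u; -u, 1] _ _
      (by ext i j; fin_cases i <;> fin_cases j <;>
        (simp [Matrix.mul_apply, Matrix.one_apply, Fin.sum_univ_two]; try ring))
      (by ext i j; fin_cases i <;> fin_cases j <;>
        (simp [Matrix.mul_apply, Matrix.one_apply, Fin.sum_univ_two]; try ring))]
    simp [Matrix.trace_fin_two, Matrix.mul_apply, Fin.sum_univ_two, pow_two]
    ring
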